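/- The number of isomorphism classes of tripartite graphs on three partite sets of two vertices each, where edges join only vertices from different partite sets and the edge relation encodes equality in a system of three pairs of elements from a common set with both elements in each pair distinct (i.e., graphs realizable as the 'similarity graph' G[u,v,x,y,c,d] of three unordered pairs {u,v},{x,y},{c,d} of distinct elements), is exactly 8. -/

import Mathlib

open Finset

/-- The partite block (`i/2`) of a vertex of the `3 × 2` tripartite similarity graph. -/
def blk (i : Fin 6) : Fin 3 := ⟨i.val / 2, by omega⟩

/-- A graph on six vertices (two per pair) is *realizable* as the similarity graph
`G[u,v,x,y,c,d]` of three unordered pairs of distinct elements: there is a labelling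
`t` of the six vertices with the two labels in each pair distinct, and an edge joins
two vertices iff they lie in different pairs and carry equal labels. -/
def Realizable (G : Fin 6 → Fin 6 → Bool) : Prop :=
  ∃ t : Fin 6 → Fin 6, t 0 ≠ t 1 ∧ t 2 ≠ t 3 ∧ t 4 ≠ t 5 ∧
    ∀ i j, G i j = decide (blk i ≠ blk j ∧ t i = t j)

/-- Two realizable similarity graphs are isomorphic when some permutation of the six
vertices preserving the pair-block structure carries one to the other. -/
def SimIso (G₁ G₂ : Fin 6 → Fin 6 → Bool) : Prop :=
  ∃ π : Equiv.Perm (Fin 6),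
    (∀ i j, blk i = blk j ↔ blk (π i) = blk (π j)) ∧
    ∀ i j, G₂ i j = G₁ (π i) (π j)

/-! ### Auxiliary machinery -/

def Gof (t : Fin 6 → Fin 6) : Fin 6 → Fin 6 → Bool :=
  fun i j => decide (blk i ≠ blk j ∧ t i = t j)

def trep : Fin 8 → Fin 6 → Fin 6 :=
  ![![0,1,1,0,1,0], ![0,1,2,1,2,1], ![0,1,2,3,3,2], ![0,1,2,1,3,1], ![0,1,2,1,2,0], ![0,1,2,3,3,1], ![0,1,2,3,4,3], ![0,1,2,3,4,5]]

def rep (k : Fin 8) : Fin 6 → Fin 6 → Bool := Gof (trep k)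

/-- witness table: (canonical labelling, class index, permutation, inverse permutation) -/
def W : List ((Fin 6 → Fin 6) × Fin 8 × (Fin 6 → Fin 6) × (Fin 6 → Fin 6)) := [
(![0,1,0,1,0,1], 0, ![0,1,3,2,5,4], ![0,1,3,2,5,4]),
  (![0,1,0,1,0,5], 1, ![5,4,1,0,3,2], ![3,2,5,4,1,0]),
  (![0,1,0,1,1,0], 0, ![0,1,3,2,4,5], ![0,1,3,2,4,5]),
  (![0,1,0,1,1,5], 1, ![5,4,0,1,2,3], ![2,3,4,5,1,0]),
  (![0,1,0,1,4,0], 1, ![4,5,1,0,3,2], ![3,2,5,4,0,1]),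
  (![0,1,0,1,4,1], 1, ![4,5,0,1,2,3], ![2,3,4,5,0,1]),
  (![0,1,0,1,4,5], 2, ![4,5,0,1,3,2], ![2,3,5,4,0,1]),
  (![0,1,0,3,0,1], 1, ![3,2,1,0,5,4], ![3,2,1,0,5,4]),
  (![0,1,0,3,0,3], 1, ![1,0,3,2,5,4], ![1,0,3,2,5,4]),
  (![0,1,0,3,0,5], 3, ![1,0,3,2,5,4], ![1,0,3,2,5,4]),
  (![0,1,0,3,1,0], 1, ![3,2,1,0,4,5], ![3,2,1,0,4,5]),
  (![0,1,0,3,1,3], 4, ![1,0,3,2,5,4], ![1,0,3,2,5,4]),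
  (![0,1,0,3,1,5], 5, ![3,2,5,4,1,0], ![5,4,1,0,3,2]),
  (![0,1,0,3,3,0], 1, ![1,0,3,2,4,5], ![1,0,3,2,4,5]),
  (![0,1,0,3,3,1], 4, ![1,0,3,2,4,5], ![1,0,3,2,4,5]),
  (![0,1,0,3,3,5], 5, ![1,0,5,4,3,2], ![1,0,5,4,3,2]),
  (![0,1,0,3,4,0], 3, ![1,0,3,2,4,5], ![1,0,3,2,4,5]),
  (![0,1,0,3,4,1], 5, ![3,2,4,5,1,0], ![5,4,1,0,2,3]),
  (![0,1,0,3,4,3], 5, ![1,0,4,5,3,2], ![1,0,5,4,2,3]),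
  (![0,1,0,3,4,5], 6, ![4,5,1,0,3,2], ![3,2,5,4,0,1]),
  (![0,1,1,0,0,1], 0, ![0,1,2,3,5,4], ![0,1,2,3,5,4]),
  (![0,1,1,0,0,5], 1, ![5,4,1,0,2,3], ![3,2,4,5,1,0]),
  (![0,1,1,0,1,0], 0, ![0,1,2,3,4,5], ![0,1,2,3,4,5]),
  (![0,1,1,0,1,5], 1, ![5,4,0,1,3,2], ![2,3,5,4,1,0]),
  (![0,1,1,0,4,0], 1, ![4,5,1,0,2,3], ![3,2,4,5,0,1]),
  (![0,1,1,0,4,1], 1, ![4,5,0,1,3,2], ![2,3,5,4,0,1]),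
  (![0,1,1,0,4,5], 2, ![4,5,0,1,2,3], ![2,3,4,5,0,1]),
  (![0,1,1,3,0,1], 1, ![3,2,0,1,4,5], ![2,3,1,0,4,5]),
  (![0,1,1,3,0,3], 4, ![0,1,3,2,5,4], ![0,1,3,2,5,4]),
  (![0,1,1,3,0,5], 5, ![3,2,5,4,0,1], ![4,5,1,0,3,2]),
  (![0,1,1,3,1,0], 1, ![3,2,0,1,5,4], ![2,3,1,0,5,4]),
  (![0,1,1,3,1,3], 1, ![0,1,3,2,5,4], ![0,1,3,2,5,4]),
  (![0,1,1,3,1,5], 3, ![0,1,3,2,5,4], ![0,1,3,2,5,4]),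
  (![0,1,1,3,3,0], 4, ![0,1,3,2,4,5], ![0,1,3,2,4,5]),
  (![0,1,1,3,3,1], 1, ![0,1,3,2,4,5], ![0,1,3,2,4,5]),
  (![0,1,1,3,3,5], 5, ![0,1,5,4,3,2], ![0,1,5,4,3,2]),
  (![0,1,1,3,4,0], 5, ![3,2,4,5,0,1], ![4,5,1,0,2,3]),
  (![0,1,1,3,4,1], 3, ![0,1,3,2,4,5], ![0,1,3,2,4,5]),
  (![0,1,1,3,4,3], 5, ![0,1,4,5,3,2], ![0,1,5,4,2,3]),
  (![0,1,1,3,4,5], 6, ![4,5,0,1,3,2], ![2,3,5,4,0,1]),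
  (![0,1,2,0,0,1], 1, ![2,3,1,0,5,4], ![3,2,0,1,5,4]),
  (![0,1,2,0,0,2], 1, ![1,0,2,3,5,4], ![1,0,2,3,5,4]),
  (![0,1,2,0,0,5], 3, ![1,0,2,3,5,4], ![1,0,2,3,5,4]),
  (![0,1,2,0,1,0], 1, ![2,3,1,0,4,5], ![3,2,0,1,4,5]),
  (![0,1,2,0,1,2], 4, ![1,0,2,3,5,4], ![1,0,2,3,5,4]),
  (![0,1,2,0,1,5], 5, ![2,3,5,4,1,0], ![5,4,0,1,3,2]),
  (![0,1,2,0,2,0], 1, ![1,0,2,3,4,5], ![1,0,2,3,4,5]),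
  (![0,1,2,0,2,1], 4, ![1,0,2,3,4,5], ![1,0,2,3,4,5]),
  (![0,1,2,0,2,5], 5, ![1,0,5,4,2,3], ![1,0,4,5,3,2]),
  (![0,1,2,0,4,0], 3, ![1,0,2,3,4,5], ![1,0,2,3,4,5]),
  (![0,1,2,0,4,1], 5, ![2,3,4,5,1,0], ![5,4,0,1,2,3]),
  (![0,1,2,0,4,2], 5, ![1,0,4,5,2,3], ![1,0,4,5,2,3]),
  (![0,1,2,0,4,5], 6, ![4,5,1,0,2,3], ![3,2,4,5,0,1]),
  (![0,1,2,1,0,1], 1, ![2,3,0,1,4,5], ![2,3,0,1,4,5]),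
  (![0,1,2,1,0,2], 4, ![0,1,2,3,5,4], ![0,1,2,3,5,4]),
  (![0,1,2,1,0,5], 5, ![2,3,5,4,0,1], ![4,5,0,1,3,2]),
  (![0,1,2,1,1,0], 1, ![2,3,0,1,5,4], ![2,3,0,1,5,4]),
  (![0,1,2,1,1,2], 1, ![0,1,2,3,5,4], ![0,1,2,3,5,4]),
  (![0,1,2,1,1,5], 3, ![0,1,2,3,5,4], ![0,1,2,3,5,4]),
  (![0,1,2,1,2,0], 4, ![0,1,2,3,4,5], ![0,1,2,3,4,5]),
  (![0,1,2,1,2,1], 1, ![0,1,2,3,4,5], ![0,1,2,3,4,5]),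
  (![0,1,2,1,2,5], 5, ![0,1,5,4,2,3], ![0,1,4,5,3,2]),
  (![0,1,2,1,4,0], 5, ![2,3,4,5,0,1], ![4,5,0,1,2,3]),
  (![0,1,2,1,4,1], 3, ![0,1,2,3,4,5], ![0,1,2,3,4,5]),
  (![0,1,2,1,4,2], 5, ![0,1,4,5,2,3], ![0,1,4,5,2,3]),
  (![0,1,2,1,4,5], 6, ![4,5,0,1,2,3], ![2,3,4,5,0,1]),
  (![0,1,2,3,0,1], 2, ![2,3,0,1,5,4], ![2,3,0,1,5,4]),
  (![0,1,2,3,0,2], 5, ![1,0,3,2,5,4], ![1,0,3,2,5,4]),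
  (![0,1,2,3,0,3], 5, ![1,0,2,3,5,4], ![1,0,2,3,5,4]),
  (![0,1,2,3,0,5], 6, ![2,3,1,0,5,4], ![3,2,0,1,5,4]),
  (![0,1,2,3,1,0], 2, ![2,3,0,1,4,5], ![2,3,0,1,4,5]),
  (![0,1,2,3,1,2], 5, ![0,1,3,2,5,4], ![0,1,3,2,5,4]),
  (![0,1,2,3,1,3], 5, ![0,1,2,3,5,4], ![0,1,2,3,5,4]),
  (![0,1,2,3,1,5], 6, ![2,3,0,1,5,4], ![2,3,0,1,5,4]),
  (![0,1,2,3,2,0], 5, ![1,0,3,2,4,5], ![1,0,3,2,4,5]),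
  (![0,1,2,3,2,1], 5, ![0,1,3,2,4,5], ![0,1,3,2,4,5]),
  (![0,1,2,3,2,3], 2, ![0,1,2,3,5,4], ![0,1,2,3,5,4]),
  (![0,1,2,3,2,5], 6, ![0,1,3,2,5,4], ![0,1,3,2,5,4]),
  (![0,1,2,3,3,0], 5, ![1,0,2,3,4,5], ![1,0,2,3,4,5]),
  (![0,1,2,3,3,1], 5, ![0,1,2,3,4,5], ![0,1,2,3,4,5]),
  (![0,1,2,3,3,2], 2, ![0,1,2,3,4,5], ![0,1,2,3,4,5]),
  (![0,1,2,3,3,5], 6, ![0,1,2,3,5,4], ![0,1,2,3,5,4]),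
  (![0,1,2,3,4,0], 6, ![2,3,1,0,4,5], ![3,2,0,1,4,5]),
  (![0,1,2,3,4,1], 6, ![2,3,0,1,4,5], ![2,3,0,1,4,5]),
  (![0,1,2,3,4,2], 6, ![0,1,3,2,4,5], ![0,1,3,2,4,5]),
  (![0,1,2,3,4,3], 6, ![0,1,2,3,4,5], ![0,1,2,3,4,5]),
  (![0,1,2,3,4,5], 7, ![0,1,2,3,4,5], ![0,1,2,3,4,5])
]

def nb (b : Bool) : ℕ := cond b 1 0

def invar (G : Fin 6 → Fin 6 → Bool) : ℕ × ℕ × ℕ × ℕ :=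
  (∑ p : Fin 6 × Fin 6, nb (G p.1 p.2),
   ∑ i : Fin 6, (∑ j : Fin 6, nb (G i j))^2,
   ∑ p : (Fin 6 × Fin 6) × Fin 6 × Fin 6, nb (G p.1.1 p.1.2) * nb (G p.2.1 p.2.2) *
     (if blk p.1.1 = blk p.2.1 ∧ blk p.1.2 = blk p.2.2 then 1 else 0),
   ∑ p : (Fin 6 × Fin 6) × Fin 6, nb (G p.1.1 p.1.2) * nb (G p.1.2 p.2) * nb (G p.1.1 p.2))

lemma simiso_refl (G : Fin 6 → Fin 6 → Bool) : SimIso G G :=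
  ⟨Equiv.refl _, fun _ _ => Iff.rfl, fun _ _ => rfl⟩

lemma simiso_symm {G₁ G₂ : Fin 6 → Fin 6 → Bool} (h : SimIso G₁ G₂) : SimIso G₂ G₁ := by
  obtain ⟨π, hb, he⟩ := h
  refine ⟨π.symm, fun i j => ?_, fun i j => ?_⟩
  · have := hb (π.symm i) (π.symm j)
    simpa using this.symm
  · have := he (π.symm i) (π.symm j)
    simpa using this.symm

lemma simiso_trans {G₁ G₂ G₃ : Fin 6 → Fin 6 → Bool} (h : SimIso G₁ G₂) (h' : SimIso G₂ G₃) :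
    SimIso G₁ G₃ := by
  obtain ⟨π, hb, he⟩ := h
  obtain ⟨σ, hb', he'⟩ := h'
  refine ⟨σ.trans π, fun i j => ?_, fun i j => ?_⟩
  · exact (hb' i j).trans (hb (σ i) (σ j))
  · exact (he' i j).trans (by rw [he (σ i) (σ j)]; rfl)

lemma invar_simiso {G₁ G₂ : Fin 6 → Fin 6 → Bool} (h : SimIso G₁ G₂) :
    invar G₂ = invar G₁ := by
  obtain ⟨π, hb, he⟩ := h
  have e1 : (∑ p : Fin 6 × Fin 6, nb (G₂ p.1 p.2)) = ∑ p : Fin 6 × Fin 6, nb (G₁ p.1 p.2) :=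
    Fintype.sum_equiv (π.prodCongr π) (fun p => nb (G₂ p.1 p.2)) (fun p => nb (G₁ p.1 p.2))
      (fun p => by simp only [Equiv.prodCongr_apply, Prod.map_fst, Prod.map_snd]; rw [he])
  have deg : ∀ i, (∑ j, nb (G₂ i j)) = ∑ j, nb (G₁ (π i) j) := by
    intro i
    rw [← Equiv.sum_comp π (fun j => nb (G₁ (π i) j))]
    exact Finset.sum_congr rfl fun j _ => by rw [he]
  have e2 : (∑ i : Fin 6, (∑ j : Fin 6, nb (G₂ i j))^2)
      = ∑ i : Fin 6, (∑ j : Fin 6, nb (G₁ i j))^2 :=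
    Fintype.sum_equiv π _ _ (fun i => by rw [deg i])
  have e3 : (∑ p : (Fin 6 × Fin 6) × Fin 6 × Fin 6, nb (G₂ p.1.1 p.1.2) * nb (G₂ p.2.1 p.2.2) *
      (if blk p.1.1 = blk p.2.1 ∧ blk p.1.2 = blk p.2.2 then 1 else 0))
      = ∑ p : (Fin 6 × Fin 6) × Fin 6 × Fin 6, nb (G₁ p.1.1 p.1.2) * nb (G₁ p.2.1 p.2.2) *
      (if blk p.1.1 = blk p.2.1 ∧ blk p.1.2 = blk p.2.2 then 1 else 0) :=
    Fintype.sum_equiv ((π.prodCongr π).prodCongr (π.prodCongr π)) _ _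
      (fun p => by
        simp only [Equiv.prodCongr_apply, Prod.map_fst, Prod.map_snd]
        rw [he, he]
        exact congrArg _ (if_congr (and_congr (hb _ _) (hb _ _)) rfl rfl))
  have e4 : (∑ p : (Fin 6 × Fin 6) × Fin 6,
      nb (G₂ p.1.1 p.1.2) * nb (G₂ p.1.2 p.2) * nb (G₂ p.1.1 p.2))
      = ∑ p : (Fin 6 × Fin 6) × Fin 6,
      nb (G₁ p.1.1 p.1.2) * nb (G₁ p.1.2 p.2) * nb (G₁ p.1.1 p.2) :=
    Fintype.sum_equiv ((π.prodCongr π).prodCongr π) _ _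
      (fun p => by
        simp only [Equiv.prodCongr_apply, Prod.map_fst, Prod.map_snd]
        rw [he, he, he])
  unfold invar
  rw [e1, e2, e3, e4]

def vals : Fin 8 → ℕ × ℕ × ℕ × ℕ :=
  ![(12, 24, 24, 12), (8, 14, 12, 6), (4, 4, 8, 0), (6, 12, 6, 6),
    (6, 6, 6, 0), (4, 4, 4, 0), (2, 2, 2, 0), (0, 0, 0, 0)]

set_option maxRecDepth 8000 in
set_option maxHeartbeats 4000000 in
lemma invar_rep : ∀ a : Fin 8, invar (rep a) = vals a := by decide

lemma rep_inj (a b : Fin 8) (h : invar (rep a) = invar (rep b)) : a = b := by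
  rw [invar_rep, invar_rep] at h
  revert h
  revert a b
  decide

/-! ### Normalization of labellings -/

def N (t : Fin 6 → Fin 6) (i : Fin 6) : Fin 6 :=
  (Finset.univ.filter (fun j => t j = t i)).min' ⟨i, by simp⟩

lemma N_app (t : Fin 6 → Fin 6) (i : Fin 6) : t (N t i) = t i := by
  have := Finset.min'_mem (Finset.univ.filter (fun j => t j = t i)) ⟨i, by simp⟩
  simpa [N] using this

lemma N_le (t : Fin 6 → Fin 6) {i j : Fin 6} (h : t j = t i) : N t i ≤ j :=
  Finset.min'_le _ _ (by simp [h])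

lemma N_congr (t : Fin 6 → Fin 6) {i j : Fin 6} (h : t i = t j) : N t i = N t j :=
  le_antisymm (N_le t ((N_app t j).trans h.symm)) (N_le t ((N_app t i).trans h))

lemma N_eq_iff (t : Fin 6 → Fin 6) (i j : Fin 6) : N t i = N t j ↔ t i = t j := by
  constructor
  · intro h
    have h1 := N_app t i
    have h2 := N_app t j
    rw [← h1, ← h2, h]
  · exact N_congr t

def Cond (s : Fin 6 → Fin 6) : Prop :=
  (∀ i, s (s i) = s i) ∧ (∀ i j, s j = s i → s i ≤ j) ∧ s 0 ≠ s 1 ∧ s 2 ≠ s 3 ∧ s 4 ≠ s 5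

instance : DecidablePred Cond := fun s => by unfold Cond; infer_instance

def GoodB (s : Fin 6 → Fin 6) : Bool := W.any (fun w => decide (w.1 = s))

lemma goodB_spec {s : Fin 6 → Fin 6} (h : GoodB s = true) : ∃ w ∈ W, w.1 = s := by
  simpa [GoodB, List.any_eq_true, decide_eq_true_eq] using h

set_option maxRecDepth 8000 in
set_option maxHeartbeats 4000000 in
lemma classify : ∀ c d e f : Fin 6,
    Cond ![0, 1, c, d, e, f] → GoodB ![0, 1, c, d, e, f] = true := by decide

def Wok (w : (Fin 6 → Fin 6) × Fin 8 × (Fin 6 → Fin 6) × (Fin 6 → Fin 6)) : Prop :=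
  (∀ i j, rep w.2.1 i j = Gof w.1 (w.2.2.1 i) (w.2.2.1 j)) ∧
  (∀ i, w.2.2.2 (w.2.2.1 i) = i) ∧ (∀ i, w.2.2.1 (w.2.2.2 i) = i) ∧
  (∀ i j, blk i = blk j ↔ blk (w.2.2.1 i) = blk (w.2.2.1 j))

instance : DecidablePred Wok := fun w => by unfold Wok; infer_instance

set_option maxRecDepth 8000 in
set_option maxHeartbeats 4000000 in
lemma Wspec : W.Forall Wok := by decide

lemma exists_rep {G : Fin 6 → Fin 6 → Bool} (h : Realizable G) : ∃ k, SimIso G (rep k) := by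
  obtain ⟨t, h01, h23, h45, hG⟩ := h
  have hGt : G = Gof t := funext fun i => funext fun j => hG i j
  set s := N t with hsdef
  have hkern : ∀ i j, s i = s j ↔ t i = t j := N_eq_iff t
  have hGs : Gof t = Gof s := by
    funext i j
    unfold Gof
    exact decide_eq_decide.mpr (and_congr Iff.rfl (hkern i j).symm)
  have hle : ∀ i, s i ≤ i := fun i => N_le t rfl
  have hs0 : s 0 = 0 := le_antisymm (hle 0) (Fin.zero_le _)
  have hs1 : s 1 = 1 := by
    have h1v : (s 1).val ≤ 1 := hle 1
    have h2v : (s 1).val ≠ 0 := by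
      intro hc
      exact h01 ((hkern 1 0).mp (Fin.ext (by simpa [hs0] using hc))).symm
    exact Fin.ext (by simpa using by omega)
  have hvec : s = ![0, 1, s 2, s 3, s 4, s 5] := by
    funext i
    match i with
    | 0 => exact hs0
    | 1 => exact hs1
    | 2 => rfl
    | 3 => rfl
    | 4 => rfl
    | 5 => rfl
  have hcond : Cond ![0, 1, s 2, s 3, s 4, s 5] := by
    rw [← hvec]
    refine ⟨fun i => N_congr t (N_app t i), fun i j hji => N_le t ((hkern j i).mp hji),
      fun hc => h01 ((hkern 0 1).mp hc), fun hc => h23 ((hkern 2 3).mp hc),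
      fun hc => h45 ((hkern 4 5).mp hc)⟩
  obtain ⟨w, hwW, hw1⟩ := goodB_spec (classify (s 2) (s 3) (s 4) (s 5) hcond)
  obtain ⟨hrep, hqp, hpq, hblk⟩ := (List.forall_iff_forall_mem.mp Wspec) w hwW
  have hw1' : w.1 = s := by rw [hw1, ← hvec]
  have key : ∀ i j, rep w.2.1 i j = Gof s (w.2.2.1 i) (w.2.2.1 j) := by
    intro i j
    rw [hrep i j, hw1']
  refine ⟨w.2.1, ?_⟩
  rw [hGt, hGs]
  exact ⟨⟨w.2.2.1, w.2.2.2, hqp, hpq⟩, hblk, key⟩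

lemma trep_ne : ∀ k : Fin 8,
    trep k 0 ≠ trep k 1 ∧ trep k 2 ≠ trep k 3 ∧ trep k 4 ≠ trep k 5 := by decide

lemma rep_realizable (k : Fin 8) : Realizable (rep k) :=
  ⟨trep k, (trep_ne k).1, (trep_ne k).2.1, (trep_ne k).2.2, fun _ _ => rfl⟩

/-- There are exactly 8 isomorphism classes of realizable similarity graphs of three
unordered pairs of distinct elements. -/
theorem eight_similarity_classes :
    ∃ f : {G : Fin 6 → Fin 6 → Bool // Realizable G} → Fin 8,
      Function.Surjective f ∧
      ∀ G₁ G₂, f G₁ = f G₂ ↔ SimIso G₁.1 G₂.1 := by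
  classical
  have hex : ∀ G : {G : Fin 6 → Fin 6 → Bool // Realizable G}, ∃ k, SimIso G.1 (rep k) :=
    fun G => exists_rep G.2
  refine ⟨fun G => (hex G).choose, ?_, ?_⟩
  · intro k
    refine ⟨⟨rep k, rep_realizable k⟩, ?_⟩
    have hspec := (hex ⟨rep k, rep_realizable k⟩).choose_spec
    exact rep_inj _ _ (invar_simiso hspec)
  · intro G₁ G₂
    have h1 : SimIso G₁.1 (rep (hex G₁).choose) := (hex G₁).choose_spec
    have h2 : SimIso G₂.1 (rep (hex G₂).choose) := (hex G₂).choose_spec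
    constructor
    · intro h
      have h' : (hex G₁).choose = (hex G₂).choose := h
      refine simiso_trans h1 ?_
      rw [h']
      exact simiso_symm h2
    · intro h
      have hh : SimIso (rep (hex G₁).choose) (rep (hex G₂).choose) :=
        simiso_trans (simiso_symm h1) (simiso_trans h h2)
      show (hex G₁).choose = (hex G₂).choose
      exact (rep_inj _ _ (invar_simiso hh)).symm
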